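/- Let d ≥ 3 be an integer and let C = { x ∈ [0,1/2]^d : there exists an index i with x_i ≥ 1/π }. Then 2^d · ∫_C 1/(2d − 2·Σ_{i=1}^d cos(2π x_i)) dx ≤ 1/((1 − cos 2)·(1 − 2/π)) · 1/(d+1); in particular this quantity is at most 3/d. -/

import Mathlib

open Real MeasureTheory Finset

lemma aux_sum_bound (d : ℕ) (a b : ℝ) (ha : 0 < a) (hb : 0 ≤ b) :
    ∑ S : Finset (Fin d), a ^ S.card * b ^ (d - S.card) / ((S.card : ℝ) + 1)
      ≤ (a + b) ^ (d + 1) / (((d : ℝ) + 1) * a) := by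
  have hda : (0:ℝ) < ((d:ℝ)+1) * a := by positivity
  rw [le_div_iff₀ hda]
  have h1 : ∑ S : Finset (Fin d), a ^ S.card * b ^ (d - S.card) / ((S.card : ℝ) + 1)
      = ∑ k ∈ range (d+1), (d.choose k : ℝ) * (a ^ k * b ^ (d - k) / ((k : ℝ) + 1)) := by
    rw [← Finset.powerset_univ]
    refine (Finset.sum_powerset_apply_card (fun k : ℕ => a ^ k * b ^ (d - k) / ((k : ℝ) + 1))).trans ?_
    rw [Finset.card_univ, Fintype.card_fin]
    refine Finset.sum_congr rfl fun k hk => ?_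
    rw [nsmul_eq_mul]
  rw [h1, Finset.sum_mul]
  have h2 : ∀ k ∈ range (d+1), (d.choose k : ℝ) * (a ^ k * b ^ (d - k) / ((k : ℝ) + 1))
      * (((d:ℝ)+1) * a) = ((d+1).choose (k+1) : ℝ) * (a ^ (k+1) * b ^ (d - k)) := by
    intro k hk
    have hnat : (d+1) * d.choose k = (d+1).choose (k+1) * (k+1) := Nat.add_one_mul_choose_eq d k
    have hcast : ((d:ℝ)+1) * (d.choose k : ℝ) = ((d+1).choose (k+1) : ℝ) * ((k:ℝ)+1) := by
      exact_mod_cast congrArg (Nat.cast : ℕ → ℝ) hnat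
    have hk1 : ((k:ℝ)+1) ≠ 0 := by positivity
    field_simp
    linear_combination (a ^ (k + 1) * b ^ (d - k)) * hcast
  rw [Finset.sum_congr rfl h2]
  have h3 : (a + b) ^ (d + 1)
      = ∑ k ∈ range (d+1), ((d+1).choose (k+1) : ℝ) * (a ^ (k+1) * b ^ (d - k)) + b ^ (d+1) := by
    rw [add_pow]
    rw [Finset.sum_range_succ']
    simp only [Nat.succ_sub_succ_eq_sub, pow_zero, one_mul, Nat.sub_zero, Nat.choose_zero_right,
      Nat.cast_one, mul_one]
    ring_nf
  nlinarith [pow_nonneg hb (d+1), h3]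

set_option maxHeartbeats 1600000 in
theorem integral_regionC_upper (d : ℕ) (hd : 3 ≤ d) :
    (2 : ℝ) ^ d * ∫ x in {x : Fin d → ℝ |
        (∀ i, x i ∈ Set.Icc (0 : ℝ) (1/2)) ∧ ∃ i, 1 / Real.pi ≤ x i},
        1 / (2 * d - 2 * ∑ i, Real.cos (2 * Real.pi * x i))
      ≤ 1 / ((1 - Real.cos 2) * (1 - 2 / Real.pi)) * (1 / ((d : ℝ) + 1)) ∧
    (2 : ℝ) ^ d * ∫ x in {x : Fin d → ℝ |
        (∀ i, x i ∈ Set.Icc (0 : ℝ) (1/2)) ∧ ∃ i, 1 / Real.pi ≤ x i},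
        1 / (2 * d - 2 * ∑ i, Real.cos (2 * Real.pi * x i))
      ≤ 3 / (d : ℝ) := by
  have hπ : (3:ℝ) < Real.pi := Real.pi_gt_three
  have hπ4 : Real.pi ≤ 4 := Real.pi_le_four
  have hπ0 : (0:ℝ) < Real.pi := by linarith
  have hb0 : (0:ℝ) < 1/Real.pi := by positivity
  have hba : 1/Real.pi < 1/2 := by rw [div_lt_div_iff₀ hπ0 two_pos]; linarith
  have hcos2 : Real.cos 2 ≤ 0 :=
    Real.cos_nonpos_of_pi_div_two_le_of_le (by linarith) (by linarith)
  have hc1 : (1:ℝ) ≤ 1 - Real.cos 2 := by linarith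
  have hc0 : (0:ℝ) < 1 - Real.cos 2 := by linarith
  set a : ℝ := 1/2 - 1/Real.pi with ha_def
  set b : ℝ := 1/Real.pi with hb_def
  have ha : 0 < a := by simp only [ha_def]; linarith
  have hb : 0 ≤ b := hb0.le
  have hab : a + b = 1/2 := by simp [ha_def, hb_def]
  set C : Set (Fin d → ℝ) := {x : Fin d → ℝ |
      (∀ i, x i ∈ Set.Icc (0 : ℝ) (1/2)) ∧ ∃ i, 1 / Real.pi ≤ x i} with hC_def
  set f : (Fin d → ℝ) → ℝ := fun x => 1 / (2 * d - 2 * ∑ i, Real.cos (2 * Real.pi * x i))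
    with hf_def
  set B : Finset (Fin d) → Set (Fin d → ℝ) := fun S =>
    Set.univ.pi fun i => if i ∈ S then Set.Icc (1/Real.pi) (1/2) else Set.Ico 0 (1/Real.pi)
    with hB_def
  set 𝒮 : Finset (Finset (Fin d)) := Finset.univ.filter (fun S => S.Nonempty) with hS_def
  -- measurability of pieces
  have hBmeas : ∀ S, MeasurableSet (B S) := by
    intro S
    refine MeasurableSet.univ_pi fun i => ?_
    split_ifs
    exacts [measurableSet_Icc, measurableSet_Ico]
  -- volume of pieces
  have hBvol : ∀ S : Finset (Fin d), volume (B S)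
      = ENNReal.ofReal a ^ S.card * ENNReal.ofReal b ^ (d - S.card) := by
    intro S
    rw [hB_def]
    rw [volume_pi_pi]
    have : ∀ i : Fin d, volume (if i ∈ S then Set.Icc (1/Real.pi) (1/2) else Set.Ico 0 (1/Real.pi))
        = if i ∈ S then ENNReal.ofReal a else ENNReal.ofReal b := by
      intro i; split_ifs <;> simp [Real.volume_Icc, Real.volume_Ico, ha_def, hb_def]
    rw [Finset.prod_congr rfl fun i _ => this i, Finset.prod_ite, Finset.prod_const,
      Finset.prod_const]
    congr 1
    · congr 1; simp
    · congr 1; rw [Finset.filter_not]; simp [Finset.card_sdiff_of_subset (Finset.subset_univ _)]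
  have hBvol_ne : ∀ S : Finset (Fin d), volume (B S) ≠ ⊤ := by
    intro S; rw [hBvol S]
    exact ENNReal.mul_ne_top (ENNReal.pow_ne_top ENNReal.ofReal_ne_top)
      (ENNReal.pow_ne_top ENNReal.ofReal_ne_top)
  have hBvol_toReal : ∀ S : Finset (Fin d), (volume (B S)).toReal
      = a ^ S.card * b ^ (d - S.card) := by
    intro S
    rw [hBvol S, ENNReal.toReal_mul, ENNReal.toReal_pow, ENNReal.toReal_pow,
      ENNReal.toReal_ofReal ha.le, ENNReal.toReal_ofReal hb]
  -- C is the disjoint union of the pieces over nonempty S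
  have hC_eq : C = ⋃ S ∈ 𝒮, B S := by
    ext x
    simp only [hC_def, Set.mem_setOf_eq, Set.mem_iUnion, hS_def, Finset.mem_filter,
      Finset.mem_univ, true_and]
    constructor
    · rintro ⟨hbox, i0, hi0⟩
      refine ⟨Finset.univ.filter (fun i => 1/Real.pi ≤ x i),
        ⟨⟨i0, show i0 ∈ Finset.univ.filter (fun j => 1/Real.pi ≤ x j) from
          Finset.mem_filter.mpr ⟨Finset.mem_univ i0, hi0⟩⟩, ?_⟩⟩
      intro i _
      dsimp only
      by_cases h : 1/Real.pi ≤ x i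
      · rw [if_pos (show i ∈ Finset.univ.filter (fun j => 1/Real.pi ≤ x j) from
          Finset.mem_filter.mpr ⟨Finset.mem_univ i, h⟩)]
        exact ⟨h, (hbox i).2⟩
      · rw [if_neg (show ¬ i ∈ Finset.univ.filter (fun j => 1/Real.pi ≤ x j) from
          fun hm => h (Finset.mem_filter.mp hm).2)]
        exact ⟨(hbox i).1, lt_of_not_ge h⟩
    · rintro ⟨S, hSne, hxB⟩
      obtain ⟨i0, hi0⟩ := hSne
      have hi0' := hxB i0 (Set.mem_univ i0)
      simp only [if_pos hi0] at hi0'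
      refine ⟨fun i => ?_, ⟨i0, hi0'.1⟩⟩
      have hi := hxB i (Set.mem_univ i)
      by_cases h : i ∈ S
      · simp only [if_pos h] at hi
        exact ⟨le_trans hb0.le hi.1, hi.2⟩
      · simp only [if_neg h] at hi
        exact ⟨hi.1, le_trans hi.2.le hba.le⟩
  -- pairwise disjoint
  have hdisj : Set.Pairwise ↑𝒮 (Function.onFun Disjoint B) := by
    intro S _ T _ hST
    rw [Function.onFun, Set.disjoint_left]
    intro x hxS hxT
    obtain ⟨i, hi⟩ := Finset.symmDiff_nonempty.mpr hST
    rw [Finset.mem_symmDiff] at hi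
    have h1 := hxS i (Set.mem_univ i)
    have h2 := hxT i (Set.mem_univ i)
    rcases hi with ⟨hiS, hiT⟩ | ⟨hiT, hiS⟩
    · simp only [if_pos hiS] at h1; simp only [if_neg hiT] at h2
      exact absurd h1.1 (not_le.mpr h2.2)
    · simp only [if_neg hiS] at h1; simp only [if_pos hiT] at h2
      exact absurd h2.1 (not_le.mpr h1.2)
  -- denominator lower bound on each piece
  have hDen : ∀ S ∈ 𝒮, ∀ x ∈ B S,
      ((S.card:ℝ)+1) * (1 - Real.cos 2) ≤ 2 * d - 2 * ∑ i, Real.cos (2 * Real.pi * x i) := by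
    intro S hS x hx
    have hrw : (2 * (d:ℝ) - 2 * ∑ i, Real.cos (2 * Real.pi * x i))
        = ∑ i : Fin d, (2 - 2 * Real.cos (2 * Real.pi * x i)) := by
      rw [Finset.sum_sub_distrib, Finset.sum_const, Finset.card_univ, Fintype.card_fin,
        ← Finset.mul_sum]
      push_cast; ring
    rw [hrw]
    have hterm0 : ∀ i ∈ Finset.univ (α := Fin d), (0:ℝ) ≤ 2 - 2 * Real.cos (2 * Real.pi * x i) :=
      fun i _ => by nlinarith [Real.cos_le_one (2 * Real.pi * x i)]
    have hstep1 : ∑ i ∈ S, (2 - 2 * Real.cos (2 * Real.pi * x i))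
        ≤ ∑ i : Fin d, (2 - 2 * Real.cos (2 * Real.pi * x i)) :=
      Finset.sum_le_sum_of_subset_of_nonneg (Finset.subset_univ S)
        (fun i hi _ => hterm0 i hi)
    have hstep2 : ∀ i ∈ S, 2 * (1 - Real.cos 2) ≤ 2 - 2 * Real.cos (2 * Real.pi * x i) := by
      intro i hi
      have hxi := hx i (Set.mem_univ i)
      simp only [if_pos hi] at hxi
      have h2le : (2:ℝ) ≤ 2 * Real.pi * x i := by
        have := (div_le_iff₀ hπ0).mp hxi.1
        nlinarith
      have hlepi : 2 * Real.pi * x i ≤ Real.pi := by nlinarith [hxi.2]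
      have := Real.cos_le_cos_of_nonneg_of_le_pi (by norm_num) hlepi h2le
      linarith
    have hstep3 : (S.card : ℝ) * (2 * (1 - Real.cos 2))
        ≤ ∑ i ∈ S, (2 - 2 * Real.cos (2 * Real.pi * x i)) := by
      calc (S.card : ℝ) * (2 * (1 - Real.cos 2))
          = ∑ _i ∈ S, 2 * (1 - Real.cos 2) := by rw [Finset.sum_const, nsmul_eq_mul]
        _ ≤ _ := Finset.sum_le_sum hstep2
    have hcard1 : (1:ℝ) ≤ S.card := by
      have : S.Nonempty := (Finset.mem_filter.mp hS).2
      exact_mod_cast this.card_pos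
    nlinarith
  -- measurability of f
  have hfm : Measurable f := by
    rw [hf_def]
    apply Measurable.div measurable_const
    apply Measurable.sub measurable_const
    apply Measurable.const_mul
    exact Finset.measurable_sum _ fun i _ =>
      Real.continuous_cos.measurable.comp ((measurable_pi_apply i).const_mul _)
  -- integrability on each piece
  have hInt : ∀ S ∈ 𝒮, IntegrableOn f (B S) := by
    intro S hS
    apply Measure.integrableOn_of_bounded (M := (((S.card:ℝ)+1) * (1 - Real.cos 2))⁻¹)
      (hBvol_ne S) hfm.aestronglyMeasurable
    rw [ae_restrict_iff' (hBmeas S)]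
    refine ae_of_all _ fun x hx => ?_
    have hden := hDen S hS x hx
    have hpos : (0:ℝ) < ((S.card:ℝ)+1) * (1 - Real.cos 2) := by positivity
    have hdenpos : (0:ℝ) < 2 * d - 2 * ∑ i, Real.cos (2 * Real.pi * x i) := lt_of_lt_of_le hpos hden
    have hfx : f x = 1 / (2 * (d:ℝ) - 2 * ∑ i, Real.cos (2 * Real.pi * x i)) := rfl
    rw [hfx, Real.norm_eq_abs, abs_of_nonneg (one_div_nonneg.mpr hdenpos.le), one_div]
    exact inv_anti₀ hpos hden
  -- bound the integral on each piece
  have hpiece : ∀ S ∈ 𝒮, ∫ x in B S, f x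
      ≤ a ^ S.card * b ^ (d - S.card) / (((S.card:ℝ)+1) * (1 - Real.cos 2)) := by
    intro S hS
    have hpos : (0:ℝ) < ((S.card:ℝ)+1) * (1 - Real.cos 2) := by positivity
    have hconst : IntegrableOn (fun _ => (((S.card:ℝ)+1) * (1 - Real.cos 2))⁻¹) (B S) volume :=
      integrableOn_const (hBvol_ne S)
    calc ∫ x in B S, f x
        ≤ ∫ _x in B S, (((S.card:ℝ)+1) * (1 - Real.cos 2))⁻¹ := by
          refine setIntegral_mono_on (hInt S hS) hconst (hBmeas S) fun x hx => ?_
          have hden := hDen S hS x hx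
          have hdenpos : (0:ℝ) < 2 * d - 2 * ∑ i, Real.cos (2 * Real.pi * x i) :=
            lt_of_lt_of_le hpos hden
          have hfx : f x = 1 / (2 * (d:ℝ) - 2 * ∑ i, Real.cos (2 * Real.pi * x i)) := rfl
          rw [hfx, one_div]
          exact inv_anti₀ hpos hden
      _ = a ^ S.card * b ^ (d - S.card) / (((S.card:ℝ)+1) * (1 - Real.cos 2)) := by
          rw [setIntegral_const, smul_eq_mul, measureReal_def, hBvol_toReal S, div_eq_mul_inv]
  -- put it together
  have hsum : ∫ x in C, f x
      ≤ (1 - Real.cos 2)⁻¹ * ((a + b) ^ (d + 1) / (((d:ℝ) + 1) * a)) := by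
    rw [hC_eq, integral_biUnion_finset 𝒮 (fun S _ => hBmeas S) hdisj hInt]
    calc ∑ S ∈ 𝒮, ∫ x in B S, f x
        ≤ ∑ S ∈ 𝒮, a ^ S.card * b ^ (d - S.card) / (((S.card:ℝ)+1) * (1 - Real.cos 2)) :=
          Finset.sum_le_sum hpiece
      _ ≤ ∑ S : Finset (Fin d),
            a ^ S.card * b ^ (d - S.card) / (((S.card:ℝ)+1) * (1 - Real.cos 2)) := by
          apply Finset.sum_le_sum_of_subset_of_nonneg (Finset.subset_univ _)
          intro S _ _
          have h1 : (0:ℝ) ≤ a ^ S.card * b ^ (d - S.card) :=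
            mul_nonneg (pow_nonneg ha.le _) (pow_nonneg hb _)
          positivity
      _ = (1 - Real.cos 2)⁻¹ * ∑ S : Finset (Fin d),
            a ^ S.card * b ^ (d - S.card) / ((S.card:ℝ)+1) := by
          rw [Finset.mul_sum]
          refine Finset.sum_congr rfl fun S _ => ?_
          field_simp
      _ ≤ (1 - Real.cos 2)⁻¹ * ((a + b) ^ (d + 1) / (((d:ℝ) + 1) * a)) := by
          exact mul_le_mul_of_nonneg_left (aux_sum_bound d a b ha hb) (by positivity)
  have hmain : (2:ℝ) ^ d * ∫ x in C, f x
      ≤ 1 / ((1 - Real.cos 2) * (1 - 2 / Real.pi)) * (1 / ((d : ℝ) + 1)) := by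
    have h2d : (0:ℝ) ≤ (2:ℝ)^d := by positivity
    have := mul_le_mul_of_nonneg_left hsum h2d
    refine le_trans this (le_of_eq ?_)
    rw [hab]
    have h2a : 1 - 2 / Real.pi = 2 * a := by rw [ha_def]; ring
    rw [h2a]
    have hpow : (2:ℝ)^d * (1/2:ℝ)^(d+1) = 1/2 := by
      rw [pow_succ, ← mul_assoc, ← mul_pow]
      norm_num
    have hdne : ((d:ℝ)+1) ≠ 0 := by positivity
    have hane : a ≠ 0 := ne_of_gt ha
    have hcne : (1 - Real.cos 2) ≠ 0 := ne_of_gt hc0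
    field_simp [pow_succ]
    ring_nf
    simp [← mul_pow]
  constructor
  · exact hmain
  · refine le_trans hmain ?_
    have hd3 : (3:ℝ) ≤ (d:ℝ) := by exact_mod_cast hd
    have hd0 : (0:ℝ) < (d:ℝ) := by linarith
    have he : (1/3:ℝ) ≤ 1 - 2 / Real.pi := by
      have : 2 / Real.pi ≤ 2/3 := by
        rw [div_le_div_iff₀ hπ0 (by norm_num : (0:ℝ) < 3)]; linarith
      linarith
    have hD2 : (1/3:ℝ) ≤ (1 - Real.cos 2) * (1 - 2 / Real.pi) := by nlinarith
    have hD2pos : (0:ℝ) < (1 - Real.cos 2) * (1 - 2 / Real.pi) := by linarith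
    have h3 : 1 / ((1 - Real.cos 2) * (1 - 2 / Real.pi)) ≤ 3 := by
      rw [div_le_iff₀ hD2pos]; linarith
    calc 1 / ((1 - Real.cos 2) * (1 - 2 / Real.pi)) * (1 / ((d : ℝ) + 1))
        ≤ 3 * (1 / ((d:ℝ)+1)) := mul_le_mul_of_nonneg_right h3 (by positivity)
      _ = 3 / ((d:ℝ)+1) := by rw [mul_one_div]
      _ ≤ 3 / (d:ℝ) := by
          apply div_le_div_of_nonneg_left (by norm_num : (0:ℝ) ≤ 3) hd0
          linarith
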